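/- Let G be a finite group with trivial solvable radical and suppose every maximal subgroup of G is either supersolvable or has prime or squared-prime index. Then G has a unique minimal normal subgroup. -/

import Mathlib

open Equiv Subgroup Pointwise



def K4 : Subgroup (Equiv.Perm (Fin 4)) where
  carrier := {x | x = 1 ∨ x = c[0,1] * c[2,3] ∨ x = c[0,2] * c[1,3] ∨ x = c[0,3] * c[1,2]}
  one_mem' := by left; rfl
  mul_mem' := by intro a b ha hb; revert ha hb; revert a b; decide
  inv_mem' := by intro a ha; revert ha; revert a; decide

instance : DecidablePred (· ∈ K4) := fun x =>
  decidable_of_iff (x = 1 ∨ x = c[0,1] * c[2,3] ∨ x = c[0,2] * c[1,3] ∨ x = c[0,3] * c[1,2]) Iff.rfl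

set_option maxRecDepth 100000 in
lemma step2 : ∀ x y : Equiv.Perm (Fin 4), Equiv.Perm.sign x = 1 → Equiv.Perm.sign y = 1 →
    x * y * x⁻¹ * y⁻¹ ∈ K4 := by decide

set_option maxRecDepth 100000 in
lemma step3 : ∀ x y : Equiv.Perm (Fin 4), x ∈ K4 → y ∈ K4 → x * y * x⁻¹ * y⁻¹ = 1 := by decide

lemma s4_solvable : IsSolvable (Equiv.Perm (Fin 4)) := by
  constructor
  refine ⟨3, le_bot_iff.mp ?_⟩
  have h1 : derivedSeries (Equiv.Perm (Fin 4)) 1 ≤ (Equiv.Perm.sign (α := Fin 4)).ker := by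
    rw [derivedSeries_succ]
    refine commutator_le.mpr fun g1 _ g2 _ => ?_
    have key : ∀ a b : ℤˣ, a * b * a⁻¹ * b⁻¹ = 1 := fun a b => by
      rw [mul_comm a b]; group
    simp only [MonoidHom.mem_ker, commutatorElement_def, map_mul, map_inv]
    exact key _ _
  have h2 : derivedSeries (Equiv.Perm (Fin 4)) 2 ≤ K4 := by
    rw [derivedSeries_succ]
    calc ⁅derivedSeries (Equiv.Perm (Fin 4)) 1, derivedSeries (Equiv.Perm (Fin 4)) 1⁆
        ≤ ⁅(Equiv.Perm.sign (α := Fin 4)).ker, (Equiv.Perm.sign (α := Fin 4)).ker⁆ :=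
          Subgroup.commutator_mono h1 h1
      _ ≤ K4 := Subgroup.commutator_le.mpr fun g1 hg1 g2 hg2 => step2 g1 g2 hg1 hg2
  calc derivedSeries (Equiv.Perm (Fin 4)) 3 ≤ ⁅K4, K4⁆ := by
        rw [derivedSeries_succ]; exact Subgroup.commutator_mono h2 h2
    _ ≤ ⊥ := Subgroup.commutator_le.mpr fun g1 hg1 g2 hg2 =>
        Subgroup.mem_bot.mpr (step3 g1 g2 hg1 hg2)

lemma perm_solvable_of_card {X : Type*} [Finite X] (hX : Nat.card X ≤ 4) :
    IsSolvable (Equiv.Perm X) := by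
  have : Fintype X := Fintype.ofFinite X
  rw [Nat.card_eq_fintype_card] at hX
  have e : X ↪ Fin 4 := (Fintype.equivFin X).toEmbedding.trans
    (Fin.castLEEmb hX)
  haveI : Group.IsSolvable (Equiv.Perm (Fin 4)) := s4_solvable
  exact solvable_of_solvable_injective (Equiv.Perm.viaEmbeddingHom_injective e)

section Helpers

open Subgroup Pointwise

variable {G : Type*} [Group G] [Finite G] {p : ℕ} [Fact p.Prime]

lemma mem_map_conj_iff {P0 : Subgroup G} {c y : G} :
    y ∈ P0.map (MulAut.conj c).toMonoidHom ↔ c⁻¹ * y * c ∈ P0 := by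
  rw [Subgroup.mem_map_equiv, MulAut.conj_symm_apply]

/-- p-maximality within a subgroup `N`. -/
def PMaxIn (p : ℕ) (N P0 : Subgroup G) : Prop :=
  P0 ≤ N ∧ IsPGroup p P0 ∧ ∀ R : Subgroup G, R ≤ N → IsPGroup p R → P0 ≤ R → R = P0

/-- The image in `G` of a Sylow `p`-subgroup of `N` is p-maximal in `N`. -/
lemma pmaxIn_map_sylow (N : Subgroup G) (P : Sylow p N) :
    PMaxIn p N ((P : Subgroup N).map N.subtype) := by
  refine ⟨Subgroup.map_subtype_le _, P.2.map _, fun R hRN hRp hPR => ?_⟩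
  have hR' : ((P : Subgroup N) : Subgroup N) ≤ R.subgroupOf N := by
    rw [Subgroup.subgroupOf]
    exact Subgroup.map_le_iff_le_comap.mp hPR
  have hR'p : IsPGroup p (R.subgroupOf N) :=
    hRp.of_equiv (Subgroup.subgroupOfEquivOfLe hRN).symm
  have := P.3 hR'p hR'
  calc R = (R.subgroupOf N).map N.subtype := by
          rw [Subgroup.subgroupOf_map_subtype, inf_of_le_left hRN]
    _ = ((P : Subgroup N) : Subgroup N).map N.subtype := by rw [this]
    _ = _ := rfl

/-- p-maximality in a normal subgroup is preserved by conjugation. -/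
lemma PMaxIn.conj {N P0 : Subgroup G} [hN : N.Normal] (hP : PMaxIn p N P0) (c : G) :
    PMaxIn p N (P0.map (MulAut.conj c).toMonoidHom) := by
  obtain ⟨hPN, hPp, hPmax⟩ := hP
  refine ⟨fun y hy => ?_, hPp.map _, fun R hRN hRp hPR => ?_⟩
  · rw [mem_map_conj_iff] at hy
    have := hN.conj_mem _ (hPN hy) c
    simpa [mul_assoc] using this
  · have h1 : R.map (MulAut.conj c⁻¹).toMonoidHom = P0 := by
      refine hPmax _ (fun y hy => ?_) (hRp.map _) (fun y hy => ?_)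
      · rw [mem_map_conj_iff] at hy
        have := hN.conj_mem _ (hRN hy) c⁻¹
        simpa [mul_assoc] using this
      · rw [mem_map_conj_iff, inv_inv]
        apply hPR
        rw [mem_map_conj_iff]
        have : c⁻¹ * (c * y * c⁻¹) * c = y := by group
        rwa [this]
    ext y
    rw [mem_map_conj_iff, ← h1, mem_map_conj_iff, inv_inv]
    have : c * (c⁻¹ * y * c) * c⁻¹ = y := by group
    rw [this]

/-- Two p-maximal subgroups of `N` contained in `K ≤ N` are conjugate in `K`. -/
lemma pmaxIn_conj_in {N K P0 Q0 : Subgroup G} (hKN : K ≤ N)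
    (hP : PMaxIn p N P0) (hQ : PMaxIn p N Q0) (hPK : P0 ≤ K) (hQK : Q0 ≤ K) :
    ∃ x ∈ K, ∀ y : G, y ∈ Q0 ↔ x * y * x⁻¹ ∈ P0 := by
  obtain ⟨hPN, hPp, hPmax⟩ := hP
  obtain ⟨hQN, hQp, hQmax⟩ := hQ
  have hPp' : IsPGroup p (P0.subgroupOf K) :=
    hPp.of_equiv (Subgroup.subgroupOfEquivOfLe hPK).symm
  have hQp' : IsPGroup p (Q0.subgroupOf K) :=
    hQp.of_equiv (Subgroup.subgroupOfEquivOfLe hQK).symm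
  obtain ⟨S, hS⟩ := hPp'.exists_le_sylow
  obtain ⟨T, hT⟩ := hQp'.exists_le_sylow
  have hSmap : ((S : Subgroup K) : Subgroup K).map K.subtype = P0 := by
    refine hPmax _ ((Subgroup.map_subtype_le _).trans hKN) (S.2.map _) ?_
    calc P0 = (P0.subgroupOf K).map K.subtype := by
          rw [Subgroup.subgroupOf_map_subtype, inf_of_le_left hPK]
      _ ≤ _ := Subgroup.map_subtype_le_map_subtype.mpr hS
  have hTmap : ((T : Subgroup K) : Subgroup K).map K.subtype = Q0 := by
    refine hQmax _ ((Subgroup.map_subtype_le _).trans hKN) (T.2.map _) ?_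
    calc Q0 = (Q0.subgroupOf K).map K.subtype := by
          rw [Subgroup.subgroupOf_map_subtype, inf_of_le_left hQK]
      _ ≤ _ := Subgroup.map_subtype_le_map_subtype.mpr hT
  obtain ⟨k, hk⟩ := MulAction.exists_smul_eq (↥K) T S
  have hST : ((S : Subgroup K) : Subgroup K)
      = ((T : Subgroup K) : Subgroup K).map (MulAut.conj k).toMonoidHom := by
    rw [← hk]
    rfl
  refine ⟨(k : G), k.2, fun y => ?_⟩
  constructor
  · intro hy
    rw [← hTmap] at hy
    obtain ⟨z, hz, rfl⟩ := Subgroup.mem_map.mp hy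
    rw [← hSmap]
    have hmem : k * z * k⁻¹ ∈ ((S : Subgroup K) : Subgroup K) := by
      rw [hST, mem_map_conj_iff]
      have : k⁻¹ * (k * z * k⁻¹) * k = z := by group
      rwa [this]
    refine ⟨k * z * k⁻¹, hmem, ?_⟩
    simp [Subgroup.coe_subtype]
  · intro hy
    rw [← hSmap] at hy
    obtain ⟨z, hz, hze⟩ := Subgroup.mem_map.mp hy
    rw [← hTmap]
    have hz' : k⁻¹ * z * k ∈ ((T : Subgroup K) : Subgroup K) := by
      rwa [hST, mem_map_conj_iff] at hz
    refine ⟨k⁻¹ * z * k, hz', ?_⟩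
    simp only [Subgroup.coe_subtype] at hze ⊢
    push_cast
    rw [hze]
    group

lemma index_modEq_one {N : Subgroup G} [hN : N.Normal] (P : Sylow p N)
    {M : Subgroup G} (hM : Subgroup.normalizer (((P : Subgroup N).map N.subtype : Subgroup G) : Set G) ≤ M) :
    M.index ≡ 1 [MOD p] := by
  set P0 := (P : Subgroup N).map N.subtype with hP0def
  have hP0M : P0 ≤ M := le_trans Subgroup.le_normalizer hM
  have hP0N : P0 ≤ N := Subgroup.map_subtype_le _
  have hPmax : PMaxIn p N P0 := pmaxIn_map_sylow N P
  have hPp : IsPGroup p P0 := P.2.map _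
  have hsmul : ∀ (u : P0) (g : G),
      u • (QuotientGroup.mk g : G ⧸ M) = QuotientGroup.mk ((u : G) * g) := fun u g => rfl
  have huniq : ∀ g : G, (QuotientGroup.mk g : G ⧸ M) ∈
      MulAction.fixedPoints P0 (G ⧸ M) → g ∈ M := by
    intro g hg
    rw [MulAction.mem_fixedPoints] at hg
    have hfix : ∀ y : G, y ∈ P0 → g⁻¹ * y⁻¹ * g ∈ M := by
      intro y hy
      have := hg ⟨y, hy⟩
      rw [hsmul] at this
      have := (QuotientGroup.eq (s := M)).mp this
      simpa [mul_assoc] using this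
    set Q0 := P0.map (MulAut.conj g⁻¹).toMonoidHom with hQ0def
    have hQmem : ∀ y, y ∈ Q0 ↔ g * y * g⁻¹ ∈ P0 := by
      intro y; rw [hQ0def, mem_map_conj_iff, inv_inv]
    have hQM : Q0 ≤ M := by
      intro y hy
      rw [hQmem] at hy
      have := hfix _ (inv_mem hy)
      simpa [mul_assoc] using this
    have hQN : Q0 ≤ N := by
      intro y hy
      rw [hQmem] at hy
      have := hN.conj_mem _ (hP0N hy) g⁻¹
      simpa [mul_assoc] using this
    have hQmax : PMaxIn p N Q0 := hPmax.conj g⁻¹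
    obtain ⟨x, hxK, hconj⟩ := pmaxIn_conj_in (K := M ⊓ N) inf_le_right hPmax hQmax
      (le_inf hP0M hP0N) (le_inf hQM hQN)
    have hnorm : x * g⁻¹ ∈ Subgroup.normalizer (P0 : Set G) := by
      rw [Subgroup.mem_normalizer_iff]
      intro h
      have h1 : h ∈ P0 ↔ g⁻¹ * h * g ∈ Q0 := by
        rw [hQmem]
        constructor
        · intro hh
          have : g * (g⁻¹ * h * g) * g⁻¹ = h := by group
          rwa [this]
        · intro hh
          have : g * (g⁻¹ * h * g) * g⁻¹ = h := by group
          rwa [this] at hh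
      rw [h1, hconj]
      have : x * (g⁻¹ * h * g) * x⁻¹ = x * g⁻¹ * h * (x * g⁻¹)⁻¹ := by group
      rw [this]
    have hxM : x ∈ M := (Subgroup.mem_inf.mp hxK).1
    have hxgM : x * g⁻¹ ∈ M := hM hnorm
    have : g⁻¹ ∈ M := by
      have := M.mul_mem (M.inv_mem hxM) hxgM
      simpa [mul_assoc] using this
    simpa using M.inv_mem this
  have hone : (QuotientGroup.mk 1 : G ⧸ M) ∈ MulAction.fixedPoints P0 (G ⧸ M) := by
    intro u
    rw [hsmul, QuotientGroup.eq]
    simpa using M.inv_mem (hP0M u.2)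
  have hcard1 : Nat.card (MulAction.fixedPoints P0 (G ⧸ M)) = 1 := by
    rw [Nat.card_eq_one_iff_unique]
    constructor
    · constructor
      intro z1 z2
      obtain ⟨w1, h1⟩ := z1
      obtain ⟨w2, h2⟩ := z2
      obtain ⟨g1, rfl⟩ := QuotientGroup.mk_surjective w1
      obtain ⟨g2, rfl⟩ := QuotientGroup.mk_surjective w2
      have e1 : (QuotientGroup.mk g1 : G ⧸ M) = QuotientGroup.mk 1 := by
        rw [QuotientGroup.eq]
        simpa using M.inv_mem (huniq g1 h1)
      have e2 : (QuotientGroup.mk g2 : G ⧸ M) = QuotientGroup.mk 1 := by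
        rw [QuotientGroup.eq]
        simpa using M.inv_mem (huniq g2 h2)
      exact Subtype.ext (e1.trans e2.symm)
    · exact ⟨⟨_, hone⟩⟩
  have := hPp.card_modEq_card_fixedPoints (G ⧸ M)
  rw [hcard1] at this
  exact this

end Helpers



/-- A group is supersolvable if it has a chain of subgroups from `⊥` to `⊤`,
each normal in the whole group, with each successive factor cyclic
(i.e. each term is generated by the previous term together with one element). -/
def IsSupersolvable (G : Type*) [Group G] : Prop :=
  ∃ (n : ℕ) (s : Fin (n + 1) → Subgroup G),
    s 0 = ⊥ ∧ s (Fin.last n) = ⊤ ∧ (∀ i, (s i).Normal) ∧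
    ∀ i : Fin n, ∃ x : G, s i.succ = s i.castSucc ⊔ Subgroup.closure {x}

lemma isSolvable_of_isSupersolvable {G : Type*} [Group G] (h : IsSupersolvable G) :
    IsSolvable G := by
  obtain ⟨n, s, h0, hlast, hnorm, hstep⟩ := h
  suffices hind : ∀ i : Fin (n + 1), IsSolvable (s i) by
    have := hind (Fin.last n)
    rw [hlast] at this
    have : Group.IsSolvable (⊤ : Subgroup G) := this
    exact solvable_of_surjective (G := (⊤ : Subgroup G)) (f := (Subgroup.topEquiv).toMonoidHom)
      (MulEquiv.surjective _)
  intro i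
  induction i using Fin.induction with
  | zero =>
      rw [h0]
      exact isSolvable_of_top_eq_bot _ (Subsingleton.elim _ _)
  | succ i ih =>
      obtain ⟨x, hx⟩ := hstep i
      set A := s i.castSucc with hA
      set B := s i.succ with hB
      have hAB : A ≤ B := by rw [hx]; exact le_sup_left
      have hxB : x ∈ B := by rw [hx]; exact Subgroup.mem_sup_right (Subgroup.subset_closure rfl)
      haveI : (A.subgroupOf B).Normal := (hnorm i.castSucc).subgroupOf B
      -- quotient is generated by image of x, hence commutative
      have hgen : ∀ q : B ⧸ (A.subgroupOf B), q ∈ Subgroup.zpowers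
          (QuotientGroup.mk (⟨x, hxB⟩ : B)) := by
        intro q
        obtain ⟨⟨a, haB⟩, rfl⟩ := QuotientGroup.mk'_surjective (A.subgroupOf B) q
        have ha2 : a ∈ (A : Set G) * (Subgroup.closure {x} : Set G) := by
          rw [← Subgroup.normal_mul]
          rw [hx] at haB
          exact haB
        obtain ⟨u, hu, v, hv, rfl⟩ := ha2
        beta_reduce at haB ⊢
        rw [← Subgroup.zpowers_eq_closure] at hv
        rw [SetLike.mem_coe, Subgroup.mem_zpowers_iff] at hv
        obtain ⟨m, rfl⟩ := hv
        have hxm : x ^ m ∈ B := zpow_mem hxB m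
        have huB : u ∈ B := hAB hu
        have : (⟨u * x ^ m, haB⟩ : B) = ⟨u, huB⟩ * ⟨x, hxB⟩ ^ m := by
          ext
          simp
        rw [QuotientGroup.mk'_apply, this]
        rw [QuotientGroup.mk_mul]
        have hu1 : (QuotientGroup.mk (⟨u, huB⟩ : B) :
            B ⧸ (A.subgroupOf B)) = 1 := by
          rw [QuotientGroup.eq_one_iff]
          exact hu
        rw [hu1, one_mul, QuotientGroup.mk_zpow]
        exact ⟨m, rfl⟩
      have hcomm : Group.IsSolvable (B ⧸ (A.subgroupOf B)) := by
        apply isSolvable_of_comm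
        intro a b
        obtain ⟨ma, rfl⟩ := hgen a
        obtain ⟨mb, rfl⟩ := hgen b
        exact zpow_mul_comm _ _ _
      haveI : Group.IsSolvable (A.subgroupOf B) := by
        haveI : Group.IsSolvable A := ih
        exact solvable_of_solvable_injective
          (f := (Subgroup.subgroupOfEquivOfLe hAB).toMonoidHom) (MulEquiv.injective _)
      exact solvable_of_ker_le_range (A.subgroupOf B).subtype
        (QuotientGroup.mk' (A.subgroupOf B))
        (by rw [QuotientGroup.ker_mk', Subgroup.range_subtype])





/-- main contradiction: two disjoint nontrivial normal subgroups, first one minimal -/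
lemma no_two_disjoint {G : Type*} [Group G] [Finite G]
    (hrad : ∀ K : Subgroup G, K.Normal → IsSolvable K → K = ⊥)
    (h : ∀ M : Subgroup G, IsCoatom M → IsSupersolvable M ∨
      ∃ q : ℕ, q.Prime ∧ (M.index = q ∨ M.index = q ^ 2))
    {N1 N2 : Subgroup G} (hN1 : N1.Normal) (h1b : N1 ≠ ⊥)
    (hmin1 : ∀ K : Subgroup G, K.Normal → K ≠ ⊥ → K ≤ N1 → K = N1)
    (hN2 : N2.Normal) (h2b : N2 ≠ ⊥) (hdisj : N1 ⊓ N2 = ⊥) : False := by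
  haveI := hN1
  haveI := hN2
  have hcard1 : 1 < Nat.card N1 := (Subgroup.one_lt_card_iff_ne_bot N1).mpr h1b
  have hcne : Nat.card N1 ≠ 0 := by positivity
  have hpne : (Nat.card N1).primeFactors.Nonempty :=
    Nat.nonempty_primeFactors.mpr hcard1
  set p := (Nat.card N1).primeFactors.max' hpne with hpdef
  have hpmem := (Nat.card N1).primeFactors.max'_mem hpne
  have hp : p.Prime := Nat.prime_of_mem_primeFactors hpmem
  have hpdvd : p ∣ Nat.card N1 := Nat.dvd_of_mem_primeFactors hpmem
  have hpmax : ∀ q : ℕ, q.Prime → q ∣ Nat.card N1 → q ≤ p := fun q hq hqd =>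
    Finset.le_max' _ _ (Nat.mem_primeFactors.mpr ⟨hq, hqd, hcne⟩)
  haveI : Fact p.Prime := ⟨hp⟩
  obtain ⟨P⟩ : Nonempty (Sylow p N1) := inferInstance
  set P0 := (P : Subgroup N1).map N1.subtype with hP0def
  have hP0N : P0 ≤ N1 := Subgroup.map_subtype_le _
  have hP0p : IsPGroup p P0 := P.2.map _
  have hP0bot : P0 ≠ ⊥ := by
    intro hb
    rw [Subgroup.map_eq_bot_iff_of_injective _ N1.subtype_injective] at hb
    have hc := P.card_eq_multiplicity
    rw [hb, Subgroup.card_bot] at hc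
    have hk : 0 < (Nat.card N1).factorization p :=
      hp.factorization_pos_of_dvd hcne hpdvd
    have := ((Nat.pow_eq_one).mp hc.symm).resolve_right hk.ne'
    exact hp.one_lt.ne' this
  have hfr : Subgroup.normalizer (P0 : Set G) ⊔ N1 = ⊤ := Sylow.normalizer_sup_eq_top P
  have hHne : Subgroup.normalizer (P0 : Set G) ≠ ⊤ := by
    intro htop
    haveI : P0.Normal := Subgroup.normalizer_eq_top_iff.mp htop
    haveI := hP0p.isNilpotent
    exact hP0bot (hrad P0 inferInstance (inferInstance : Group.IsSolvable P0))
  obtain ⟨M, hMco, hHM⟩ := (IsCoatomic.eq_top_or_exists_le_coatom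
    (Subgroup.normalizer (P0 : Set G))).resolve_left hHne
  have hMne : M ≠ ⊤ := hMco.1
  have hN1M : ¬ N1 ≤ M := by
    intro hle
    apply hMne
    rw [eq_top_iff, ← hfr]
    exact sup_le hHM hle
  have hsupM : N1 ⊔ M = ⊤ := by
    rw [eq_top_iff, ← hfr]
    exact sup_le (le_trans hHM le_sup_right) le_sup_left
  -- index of M divides card N1
  have horb : MulAction.orbit N1 (QuotientGroup.mk 1 : G ⧸ M) = Set.univ := by
    apply Set.eq_univ_of_forall
    intro z
    obtain ⟨g, rfl⟩ := QuotientGroup.mk_surjective z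
    have hg : g ∈ ((N1 ⊔ M : Subgroup G) : Set G) := by rw [hsupM]; trivial
    rw [Subgroup.normal_mul] at hg
    obtain ⟨n, hn, m, hm, rfl⟩ := hg
    rw [MulAction.mem_orbit_iff]
    refine ⟨⟨n, hn⟩, ?_⟩
    have : (⟨n, hn⟩ : N1) • (QuotientGroup.mk 1 : G ⧸ M) = QuotientGroup.mk n := by
      show (QuotientGroup.mk (n * 1) : G ⧸ M) = QuotientGroup.mk n
      rw [mul_one]
    rw [this, QuotientGroup.eq]
    beta_reduce
    have : n⁻¹ * (n * m) = m := by group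
    rw [this]
    exact hm
  have hidxdvd : M.index ∣ Nat.card N1 := by
    have h1 := MulAction.index_stabilizer N1 (QuotientGroup.mk 1 : G ⧸ M)
    rw [horb, Set.ncard_univ] at h1
    have h2 := Subgroup.index_dvd_card
      (H := MulAction.stabilizer N1 (QuotientGroup.mk 1 : G ⧸ M))
    rw [h1] at h2
    exact h2
  rcases h M hMco with hss | ⟨q, hq, hidx⟩
  · -- supersolvable maximal subgroup: contradiction using N2
    haveI : Group.IsSolvable M := isSolvable_of_isSupersolvable hss
    have hsurj : Function.Surjective ((QuotientGroup.mk' N1).comp M.subtype) := by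
      intro z
      obtain ⟨g, rfl⟩ := QuotientGroup.mk'_surjective N1 z
      have hg : g ∈ ((N1 ⊔ M : Subgroup G) : Set G) := by rw [hsupM]; trivial
      rw [Subgroup.normal_mul] at hg
      obtain ⟨n, hn, m, hm, rfl⟩ := hg
      refine ⟨⟨m, hm⟩, ?_⟩
      show (QuotientGroup.mk m : G ⧸ N1) = QuotientGroup.mk (n * m)
      rw [QuotientGroup.eq]
      have he : m⁻¹ * (n * m) = m⁻¹ * n * m⁻¹⁻¹ := by group
      rw [he]
      exact hN1.conj_mem n hn m⁻¹
    haveI : Group.IsSolvable (G ⧸ N1) := solvable_of_surjective hsurj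
    have hinj : Function.Injective ((QuotientGroup.mk' N1).comp N2.subtype) := by
      rw [← MonoidHom.ker_eq_bot_iff]
      rw [eq_bot_iff]
      intro y hy
      rw [MonoidHom.mem_ker] at hy
      have : (y : G) ∈ N1 := (QuotientGroup.eq_one_iff _).mp hy
      have : (y : G) ∈ N1 ⊓ N2 := Subgroup.mem_inf.mpr ⟨this, y.2⟩
      rw [hdisj, Subgroup.mem_bot] at this
      rw [Subgroup.mem_bot]
      exact Subtype.ext this
    haveI : Group.IsSolvable N2 := solvable_of_solvable_injective hinj
    exact h2b (hrad N2 hN2 (inferInstance : Group.IsSolvable N2))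
  · -- prime or prime squared index
    have hmod : M.index ≡ 1 [MOD p] := index_modEq_one P hHM
    have hqdvd : q ∣ M.index := by
      rcases hidx with he | he
      · rw [he]
      · rw [he]; exact dvd_pow_self q two_ne_zero
    have hqcard : q ∣ Nat.card N1 := hqdvd.trans hidxdvd
    have hqp : q ≤ p := hpmax q hq hqcard
    have hige1 : 1 ≤ M.index := Nat.one_le_iff_ne_zero.mpr Subgroup.index_ne_zero_of_finite
    have hpdiv : p ∣ M.index - 1 := (Nat.modEq_iff_dvd' hige1).mp hmod.symm
    have hidx4 : M.index = 4 := by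
      rcases hidx with he | he
      · exfalso
        rw [he] at hpdiv
        have hlt : q - 1 < p := by
          have := hp.two_le
          omega
        have := Nat.eq_zero_of_dvd_of_lt hpdiv hlt
        have := hq.one_lt
        omega
      · -- index = q^2
        obtain ⟨a, ha⟩ : ∃ a, q = a + 1 := ⟨q - 1, by have := hq.one_lt; omega⟩
        have hkey : q ^ 2 - 1 = a * (a + 2) := by
          have hh : q ^ 2 = a * (a + 2) + 1 := by rw [ha]; ring
          omega
        rw [he, hkey] at hpdiv
        have hpq1 : p = q + 1 := by
          rcases hp.dvd_mul.mp hpdiv with hd | hd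
          · exfalso
            have hlt : a < p := by have := hp.two_le; omega
            have := Nat.eq_zero_of_dvd_of_lt hd hlt
            have := hq.one_lt
            omega
          · have hle : p ≤ a + 2 := Nat.le_of_dvd (by omega) hd
            have : p = a + 1 ∨ p = a + 2 := by omega
            rcases this with hpa | hpa
            · exfalso
              have hd1 : p ∣ (a + 2) - (a + 1) := Nat.dvd_sub hd (hpa ▸ dvd_refl p)
              have : (a + 2) - (a + 1) = 1 := by omega
              rw [this] at hd1
              have := Nat.le_of_dvd one_pos hd1
              have := hp.two_le
              omega
            · omega
        rcases hq.eq_two_or_odd' with rfl | hodd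
        · rw [he]; norm_num
        · exfalso
          have hpe : Even p := by
            rw [hpq1]
            exact Odd.add_one hodd
          have := (Nat.Prime.even_iff hp).mp hpe
          have := hq.one_lt
          omega
    -- final: N1 embeds into Perm (G ⧸ M)
    set C := M.normalCore with hCdef
    have hCM : C ≤ M := M.normalCore_le
    haveI : C.Normal := M.normalCore_normal
    haveI : (N1 ⊓ C).Normal := Subgroup.normal_inf_normal N1 C
    by_cases hbc : N1 ⊓ C = ⊥
    · have hinj : Function.Injective
          ((MulAction.toPermHom G (G ⧸ M)).comp N1.subtype) := by
        rw [← MonoidHom.ker_eq_bot_iff, eq_bot_iff]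
        intro y hy
        rw [MonoidHom.mem_ker] at hy
        have h1 : (y : G) ∈ C := by
          rw [hCdef, Subgroup.normalCore_eq_ker, MonoidHom.mem_ker]
          exact hy
        have : (y : G) ∈ N1 ⊓ C := Subgroup.mem_inf.mpr ⟨y.2, h1⟩
        rw [hbc, Subgroup.mem_bot] at this
        rw [Subgroup.mem_bot]
        exact Subtype.ext this
      haveI : Group.IsSolvable (Equiv.Perm (G ⧸ M)) := by
        apply perm_solvable_of_card
        show Nat.card (G ⧸ M) ≤ 4
        have : M.index = Nat.card (G ⧸ M) := rfl
        omega
      haveI : Group.IsSolvable N1 := solvable_of_solvable_injective hinj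
      exact h1b (hrad N1 hN1 (inferInstance : Group.IsSolvable N1))
    · have := hmin1 _ (by infer_instance) hbc inf_le_left
      have hle : N1 ≤ C := inf_eq_left.mp this
      exact hN1M (hle.trans hCM)

theorem existsUnique_minimal_normal (G : Type*) [Group G] [Finite G]
    (hrad : ∀ K : Subgroup G, K.Normal → IsSolvable K → K = ⊥)
    (h : ∀ M : Subgroup G, IsCoatom M → IsSupersolvable M ∨
      ∃ q : ℕ, q.Prime ∧ (M.index = q ∨ M.index = q ^ 2))
    (hG : ¬ IsSolvable G) :
    ∃! N : Subgroup G, N.Normal ∧ N ≠ ⊥ ∧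
      ∀ K : Subgroup G, K.Normal → K ≠ ⊥ → K ≤ N → K = N := by
  haveI : Nontrivial G := by
    rcases subsingleton_or_nontrivial G with hs | hn
    · exact absurd (inferInstance : Group.IsSolvable G) hG
    · exact hn
  obtain ⟨N, hNmem, hNmin⟩ := (wellFounded_lt (α := Subgroup G)).has_min
    {K : Subgroup G | K.Normal ∧ K ≠ ⊥} ⟨⊤, inferInstance, by simp⟩
  obtain ⟨hNnorm, hNbot⟩ : N.Normal ∧ N ≠ ⊥ := hNmem
  have pmin : ∀ K : Subgroup G, K.Normal → K ≠ ⊥ → K ≤ N → K = N := by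
    intro K h1 h2 hle
    by_contra hne
    exact hNmin K ⟨h1, h2⟩ (lt_of_le_of_ne hle hne)
  refine ⟨N, ⟨hNnorm, hNbot, pmin⟩, ?_⟩
  rintro N' ⟨h1', h2', hmin'⟩
  by_contra hne
  haveI := hNnorm
  haveI := h1'
  have hdisj : N' ⊓ N = ⊥ := by
    by_contra hd
    haveI : (N' ⊓ N).Normal := Subgroup.normal_inf_normal N' N
    have e1 := hmin' _ this hd inf_le_left
    have e2 := pmin _ this hd inf_le_right
    exact hne (e1.symm.trans e2)
  exact no_two_disjoint hrad h h1' h2' hmin' hNnorm hNbot hdisj
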